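/- Let H : ℝ → ℝ be a bounded C⁴ function with H(0) = 0, H(η) = H(−η) for all η, and C_4 := max_{0≤p≤4} sup_η |H^{(p)}(η)| < ∞. Then for every a ≥ 0 and every N ≥ 1, D_N(H, a) ≤ [ (8 C_4 + D_1(H,a)) · D_1(H,a) ]^{1/2}. -/

import Mathlib

open MeasureTheory Real Filter

noncomputable section

private lemma min_le_sqrt_mul {p q : ℝ} (hp : 0 ≤ p) (hq : 0 ≤ q) :
    min p q ≤ Real.sqrt (p * q) := by
  have h0 : 0 ≤ min p q := le_min hp hq
  calc min p q = Real.sqrt (min p q * min p q) := (Real.sqrt_mul_self h0).symm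
    _ ≤ Real.sqrt (p * q) :=
        Real.sqrt_le_sqrt (mul_le_mul (min_le_left _ _) (min_le_right _ _) h0 hp)

private lemma min_le_add3 {p q1 q2 q3 : ℝ} (hp : 0 ≤ p) (h1 : 0 ≤ q1) (h2 : 0 ≤ q2)
    (h3 : 0 ≤ q3) : min p (q1 + q2 + q3) ≤ min p q1 + min p q2 + min p q3 := by
  rcases le_total p q1 with h | h
  · have e1 : min p q1 = p := min_eq_left h
    have l1 := min_le_left p (q1 + q2 + q3)
    have m2 : 0 ≤ min p q2 := le_min hp h2
    have m3 : 0 ≤ min p q3 := le_min hp h3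
    linarith
  rcases le_total p q2 with h' | h'
  · have e2 : min p q2 = p := min_eq_left h'
    have l1 := min_le_left p (q1 + q2 + q3)
    have m1 : 0 ≤ min p q1 := le_min hp h1
    have m3 : 0 ≤ min p q3 := le_min hp h3
    linarith
  rcases le_total p q3 with h'' | h''
  · have e3 : min p q3 = p := min_eq_left h''
    have l1 := min_le_left p (q1 + q2 + q3)
    have m1 : 0 ≤ min p q1 := le_min hp h1
    have m2 : 0 ≤ min p q2 := le_min hp h2
    linarith
  · have e1 : min p q1 = q1 := min_eq_right h
    have e2 : min p q2 = q2 := min_eq_right h'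
    have e3 : min p q3 = q3 := min_eq_right h''
    have l1 := min_le_right p (q1 + q2 + q3)
    linarith

private lemma iDW_eq {f : ℝ → ℝ} (hf : ContDiff ℝ 4 f) {m : ℕ} (hm : (m : ℕ∞) ≤ 4)
    {s : Set ℝ} (hs : UniqueDiffOn ℝ s) {y : ℝ} (hy : y ∈ s) :
    iteratedDerivWithin m f s y = iteratedDeriv m f y := by
  have h : HasFTaylorSeriesUpTo (4 : ℕ∞) f (ftaylorSeries ℝ f) :=
    contDiff_iff_ftaylorSeries.mp (by exact_mod_cast hf)
  have h1 : HasFTaylorSeriesUpToOn (4 : ℕ∞) f (ftaylorSeries ℝ f) s :=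
    (hasFTaylorSeriesUpToOn_univ_iff.mpr h).mono (Set.subset_univ s)
  have h2 := h1.eq_iteratedFDerivWithin_of_uniqueDiffOn (by exact_mod_cast hm) hs hy
  have h3 := h.eq_iteratedFDeriv (by exact_mod_cast hm) y
  rw [iteratedDerivWithin, iteratedDeriv, ← h2, h3]

private lemma taylor_bound {f : ℝ → ℝ} (hf : ContDiff ℝ 4 f) {n : ℕ} (hn : n + 1 ≤ 4) {M : ℝ}
    (hM : ∀ y : ℝ, |iteratedDeriv (n + 1) f y| ≤ M) {x : ℝ} (hx : 0 < x) :
    |f x - ∑ k ∈ Finset.range (n + 1), ((k.factorial : ℝ))⁻¹ * x ^ k * iteratedDeriv k f 0| ≤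
      M * x ^ (n + 1) / (n + 1).factorial := by
  have hs := uniqueDiffOn_Icc hx
  have hkey : ∀ (m : ℕ), m ≤ 4 → ∀ y ∈ Set.Icc (0 : ℝ) x,
      iteratedDerivWithin m f (Set.Icc 0 x) y = iteratedDeriv m f y :=
    fun m hm y hy => iDW_eq hf (by exact_mod_cast hm) hs hy
  have hf1 : ContDiffOn ℝ n f (Set.Icc 0 x) :=
    (hf.of_le (by exact_mod_cast (by omega : n ≤ 4))).contDiffOn
  have hgl : Differentiable ℝ (iteratedDeriv n f) :=
    hf.differentiable_iteratedDeriv n (by exact_mod_cast (by omega : n < 4))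
  have hdiff : DifferentiableOn ℝ (iteratedDerivWithin n f (Set.Icc 0 x)) (Set.Ioo 0 x) :=
    (hgl.differentiableOn).congr fun y hy => hkey n (by omega) y (Set.Ioo_subset_Icc_self hy)
  obtain ⟨x', hx', hrem⟩ := taylor_mean_remainder_lagrange hx.ne
    (by rwa [Set.uIcc_of_le hx.le]) (by rwa [Set.uIcc_of_le hx.le, Set.uIoo_of_le hx.le])
  simp only [Set.uIcc_of_le hx.le, Set.uIoo_of_le hx.le] at hx' hrem
  have hsum : taylorWithinEval f n (Set.Icc 0 x) 0 x =
      ∑ k ∈ Finset.range (n + 1), ((k.factorial : ℝ))⁻¹ * x ^ k * iteratedDeriv k f 0 := by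
    rw [taylor_within_apply]
    refine Finset.sum_congr rfl fun k hk => ?_
    have hk4 : k ≤ 4 := by have := Finset.mem_range.mp hk; omega
    rw [hkey k hk4 0 (Set.left_mem_Icc.mpr hx.le)]
    simp [smul_eq_mul, mul_assoc]
  rw [hsum] at hrem
  rw [hrem, hkey (n + 1) (by omega) x' (Set.Ioo_subset_Icc_self hx'), sub_zero]
  have hd := hM x'
  rw [abs_div, abs_mul, abs_of_pos (pow_pos hx _), Nat.abs_cast]
  gcongr

/-- `D_N(H,a) = sup_{η ≠ 0} |Σⱼ H(ηⱼ) Γ_{N-1}(η^j)| / (a² + |η|²)`, where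
`Γ_{N-1}(η^j) = ∏_{i≠j} e^{-π ηᵢ²}`. -/
def DN (N : ℕ) (H : ℝ → ℝ) (a : ℝ) : ℝ :=
  ⨆ η : {η : Fin N → ℝ // η ≠ 0},
    |∑ j, H (η.1 j) * ∏ i ∈ Finset.univ.erase j, Real.exp (-Real.pi * (η.1 i) ^ 2)| /
      (a ^ 2 + ∑ i, (η.1 i) ^ 2)

/-- `C₄ = max_{p ≤ 4} sup_η |H⁽ᵖ⁾(η)|`. -/
def derivBound4 (H : ℝ → ℝ) : ℝ :=
  ⨆ p : Fin 5, ⨆ η : ℝ, |iteratedDeriv (p : ℕ) H η|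

set_option maxHeartbeats 2000000 in
/-- **Proposition 4 (`estim`)**: for bounded even `C⁴` functions `H` with `H(0)=0`,
`D_N(H,a) ≤ √((8C₄ + D₁(H,a)) D₁(H,a))` for all `a ≥ 0`, `N ≥ 1`. -/
theorem DN_le_sqrt (H : ℝ → ℝ) (hC : ContDiff ℝ 4 H)
    (hbdd : ∀ p : Fin 5, BddAbove (Set.range fun η => |iteratedDeriv (p : ℕ) H η|))
    (hH0 : H 0 = 0) (heven : ∀ η, H η = H (-η))
    (a : ℝ) (ha : 0 ≤ a) (N : ℕ) (hN : 1 ≤ N) :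
    DN N H a ≤ Real.sqrt ((8 * derivBound4 H + DN 1 H a) * DN 1 H a) := by
  classical
  set C := derivBound4 H with hCdef
  set D := DN 1 H a with hDdef
  -- upper bounds by C on all derivatives up to order 4
  have hCp : ∀ (p : Fin 5) (y : ℝ), |iteratedDeriv (p : ℕ) H y| ≤ C := by
    intro p y
    have h1 : |iteratedDeriv (p : ℕ) H y| ≤ ⨆ η : ℝ, |iteratedDeriv (p : ℕ) H η| :=
      le_ciSup (hbdd p) y
    have h2 : (⨆ η : ℝ, |iteratedDeriv (p : ℕ) H η|) ≤ C := by
      rw [hCdef]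
      exact le_ciSup (f := fun p : Fin 5 => ⨆ η : ℝ, |iteratedDeriv (p : ℕ) H η|)
        (Set.Finite.bddAbove (Set.finite_range _)) p
    exact h1.trans h2
  have hC2 : ∀ y : ℝ, |iteratedDeriv 2 H y| ≤ C := fun y => hCp ⟨2, by norm_num⟩ y
  have hC4 : ∀ y : ℝ, |iteratedDeriv 4 H y| ≤ C := fun y => hCp ⟨4, by norm_num⟩ y
  have hC0 : 0 ≤ C := (abs_nonneg _).trans (hC2 0)
  -- odd derivatives vanish at 0
  have hodd : ∀ n : ℕ, Odd n → iteratedDeriv n H 0 = 0 := by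
    intro n hn
    have h1 : (fun y : ℝ => H (-y)) = H := funext fun y => (heven y).symm
    have h2 := iteratedDeriv_comp_neg n H 0
    rw [h1, neg_zero] at h2
    have h3 : ((-1 : ℝ) ^ n) = -1 := hn.neg_one_pow
    rw [h3] at h2
    simp only [smul_eq_mul, neg_one_mul] at h2
    linarith
  have h1d : iteratedDeriv 1 H 0 = 0 := hodd 1 ⟨0, by ring⟩
  have h3d : iteratedDeriv 3 H 0 = 0 := hodd 3 ⟨1, by ring⟩
  set c : ℝ := iteratedDeriv 2 H 0 / 2 with hcdef
  -- Taylor bounds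
  have T1 : ∀ y : ℝ, |H y| ≤ C / 2 * y ^ 2 := by
    have base : ∀ y : ℝ, 0 < y → |H y| ≤ C / 2 * y ^ 2 := by
      intro y hy
      have h := taylor_bound hC (n := 1) (by norm_num) hC2 hy
      have hsum : ∑ k ∈ Finset.range 2, ((k.factorial : ℝ))⁻¹ * y ^ k * iteratedDeriv k H 0
          = 0 := by
        rw [Finset.sum_range_succ, Finset.sum_range_one]
        simp [iteratedDeriv_zero, hH0, h1d]
      rw [hsum, sub_zero] at h
      have : ((2 : ℕ).factorial : ℝ) = 2 := by norm_num [Nat.factorial]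
      rw [this] at h
      linarith
    intro y
    rcases lt_trichotomy y 0 with hy | rfl | hy
    · have h := base (-y) (by linarith)
      rw [← heven y, (by ring : (-y : ℝ) ^ 2 = y ^ 2)] at h
      exact h
    · simp [hH0]
    · exact base y hy
  have T2 : ∀ y : ℝ, |H y - c * y ^ 2| ≤ C / 24 * y ^ 4 := by
    have base : ∀ y : ℝ, 0 < y → |H y - c * y ^ 2| ≤ C / 24 * y ^ 4 := by
      intro y hy
      have h := taylor_bound hC (n := 3) (by norm_num) hC4 hy
      have hsum : ∑ k ∈ Finset.range 4, ((k.factorial : ℝ))⁻¹ * y ^ k * iteratedDeriv k H 0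
          = c * y ^ 2 := by
        rw [Finset.sum_range_succ, Finset.sum_range_succ, Finset.sum_range_succ,
          Finset.sum_range_one]
        rw [hcdef]
        simp [iteratedDeriv_zero, hH0, h1d, h3d, Nat.factorial]
        ring
      rw [hsum] at h
      have : ((4 : ℕ).factorial : ℝ) = 24 := by norm_num [Nat.factorial]
      rw [this] at h
      linarith
    intro y
    rcases lt_trichotomy y 0 with hy | rfl | hy
    · have h := base (-y) (by linarith)
      rw [← heven y, (by ring : (-y : ℝ) ^ 2 = y ^ 2),
        (by ring : (-y : ℝ) ^ 4 = y ^ 4)] at h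
      exact h
    · simp [hH0]
    · exact base y hy
  -- the D₁ supremum: basic facts
  have hsub1 : ∀ (y : ℝ), y ≠ 0 → ((fun _ : Fin 1 => y) : Fin 1 → ℝ) ≠ 0 := by
    intro y hy h
    exact hy (congrFun h 0)
  have hcoord : ∀ η : {η : Fin 1 → ℝ // η ≠ 0}, η.1 0 ≠ 0 := by
    intro η h
    exact η.2 (funext fun i => by rw [Subsingleton.elim i 0]; exact h)
  have herase1 : (Finset.univ.erase (0 : Fin 1)) = ∅ := by decide
  have hF1val : ∀ η : {η : Fin 1 → ℝ // η ≠ 0},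
      (|∑ j, H (η.1 j) * ∏ i ∈ Finset.univ.erase j, Real.exp (-Real.pi * (η.1 i) ^ 2)| /
        (a ^ 2 + ∑ i, (η.1 i) ^ 2)) = |H (η.1 0)| / (a ^ 2 + (η.1 0) ^ 2) := by
    intro η
    rw [Fin.sum_univ_one, Fin.sum_univ_one, herase1]
    simp
  have hterm1 : ∀ (y : ℝ), y ≠ 0 → |H y| / (a ^ 2 + y ^ 2) ≤ C / 2 := by
    intro y hy
    have hpos : 0 < a ^ 2 + y ^ 2 :=
      add_pos_of_nonneg_of_pos (sq_nonneg a) (pow_two_pos_of_ne_zero hy)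
    rw [div_le_iff₀ hpos]
    have := T1 y
    nlinarith [sq_nonneg a, hC0]
  have hbdd1 : BddAbove (Set.range fun η : {η : Fin 1 → ℝ // η ≠ 0} =>
      |∑ j, H (η.1 j) * ∏ i ∈ Finset.univ.erase j, Real.exp (-Real.pi * (η.1 i) ^ 2)| /
        (a ^ 2 + ∑ i, (η.1 i) ^ 2)) := by
    refine ⟨C / 2, ?_⟩
    rintro z ⟨η, rfl⟩
    dsimp only
    rw [hF1val η]
    exact hterm1 _ (hcoord η)
  haveI hne1 : Nonempty {η : Fin 1 → ℝ // η ≠ 0} :=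
    ⟨⟨fun _ => 1, hsub1 1 one_ne_zero⟩⟩
  have hD_ge : ∀ (y : ℝ), y ≠ 0 → |H y| / (a ^ 2 + y ^ 2) ≤ D := by
    intro y hy
    have h := le_ciSup hbdd1 (⟨fun _ => y, hsub1 y hy⟩ : {η : Fin 1 → ℝ // η ≠ 0})
    rw [hF1val] at h
    exact h
  have hD_ge' : ∀ (y : ℝ), y ≠ 0 → |H y| ≤ D * (a ^ 2 + y ^ 2) := by
    intro y hy
    have hpos : 0 < a ^ 2 + y ^ 2 :=
      add_pos_of_nonneg_of_pos (sq_nonneg a) (pow_two_pos_of_ne_zero hy)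
    exact (div_le_iff₀ hpos).mp (hD_ge y hy)
  have hD0 : 0 ≤ D := by
    have := hD_ge 1 one_ne_zero
    have h0 : 0 ≤ |H 1| / (a ^ 2 + 1 ^ 2) := by positivity
    linarith
  have hDC : D ≤ C / 2 := by
    rw [hDdef]
    exact ciSup_le fun η => (hF1val η) ▸ hterm1 _ (hcoord η)
  -- nonempty index for general N
  haveI hneN : Nonempty {η : Fin N → ℝ // η ≠ 0} := by
    refine ⟨⟨fun _ => 1, ?_⟩⟩
    intro h
    have := congrFun h ⟨0, hN⟩
    norm_num at this
  -- trivial case : D = 0 (then H ≡ 0)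
  by_cases hDzero : D = 0
  · have hH' : ∀ y : ℝ, H y = 0 := by
      intro y
      rcases eq_or_ne y 0 with rfl | hy
      · exact hH0
      · have := hD_ge' y hy
        rw [hDzero, zero_mul] at this
        exact abs_eq_zero.mp (le_antisymm this (abs_nonneg _))
    have hzero : DN N H a = 0 := by
      have hfun : (fun η : {η : Fin N → ℝ // η ≠ 0} =>
          |∑ j, H (η.1 j) * ∏ i ∈ Finset.univ.erase j, Real.exp (-Real.pi * (η.1 i) ^ 2)| /
            (a ^ 2 + ∑ i, (η.1 i) ^ 2)) = fun _ => (0 : ℝ) := by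
        funext η
        simp [hH']
      rw [DN, hfun]
      exact ciSup_const
    rw [hzero]
    exact Real.sqrt_nonneg _
  -- main case
  have hDpos : 0 < D := lt_of_le_of_ne hD0 (Ne.symm hDzero)
  have hCpos : 0 < C := by linarith
  set μ : ℝ := Real.sqrt (C * D / 6) with hμdef
  have hμ0 : 0 ≤ μ := Real.sqrt_nonneg _
  have hμsq : μ ^ 2 = C * D / 6 := Real.sq_sqrt (by positivity)
  -- bound on the quadratic Taylor coefficient
  have hc_le : |c| ≤ D + a * μ := by
    have key : ∀ t : ℝ, 0 < t → |c| ≤ D + D * a ^ 2 / t + C / 24 * t := by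
      intro t ht
      set y := Real.sqrt t with hydef
      have hy2 : y ^ 2 = t := Real.sq_sqrt ht.le
      have hypos : 0 < y := Real.sqrt_pos.mpr ht
      have h1 : |c| * t ≤ |H y| + |H y - c * y ^ 2| := by
        have e : c * y ^ 2 = H y - (H y - c * y ^ 2) := by ring
        calc |c| * t = |c * y ^ 2| := by
              rw [abs_mul, abs_of_nonneg (sq_nonneg y), hy2]
          _ = |H y - (H y - c * y ^ 2)| := by rw [← e]
          _ ≤ |H y| + |H y - c * y ^ 2| := abs_sub _ _
      have h2 : |H y| ≤ D * (a ^ 2 + t) := by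
        have := hD_ge' y hypos.ne'
        rwa [hy2] at this
      have h3 : |H y - c * y ^ 2| ≤ C / 24 * t ^ 2 := by
        have := T2 y
        calc |H y - c * y ^ 2| ≤ C / 24 * y ^ 4 := this
          _ = C / 24 * t ^ 2 := by rw [show y ^ 4 = (y ^ 2) ^ 2 by ring, hy2]
      have h4 : |c| * t ≤ D * (a ^ 2 + t) + C / 24 * t ^ 2 := by linarith
      have h5 : D * a ^ 2 / t * t = D * a ^ 2 := div_mul_cancel₀ _ ht.ne'
      rw [← mul_le_mul_iff_of_pos_right ht]
      nlinarith [h4, h5]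
    rcases eq_or_lt_of_le ha with ha0 | hapos
    · have hc' : |c| ≤ D := by
        by_contra hlt
        push_neg at hlt
        have ht : 0 < 12 * (|c| - D) / C := div_pos (by linarith) hCpos
        have := key _ ht
        rw [← ha0] at this
        have he : C / 24 * (12 * (|c| - D) / C) = (|c| - D) / 2 := by
          field_simp
          ring
        rw [he] at this
        simp at this
        linarith
      calc |c| ≤ D := hc'
        _ ≤ D + a * μ := by nlinarith [mul_nonneg ha hμ0]
    · set s24 : ℝ := Real.sqrt (24 * D / C) with hs24def
      have hs24sq : s24 ^ 2 = 24 * D / C := Real.sq_sqrt (by positivity)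
      have hs24pos : 0 < s24 := Real.sqrt_pos.mpr (by positivity)
      have ht0 : 0 < a * s24 := mul_pos hapos hs24pos
      have h := key _ ht0
      have hs24sq' : C * s24 ^ 2 = 24 * D := by
        rw [hs24sq]
        field_simp [hCpos.ne']
      have e1 : D * a ^ 2 / (a * s24) = C / 24 * (a * s24) := by
        rw [div_eq_iff ht0.ne']
        linear_combination (-a ^ 2 / 24) * hs24sq'
      have e2 : C / 24 * (a * s24) + C / 24 * (a * s24) = a * μ := by
        have h12 : C / 12 * s24 = μ := by
          rw [hμdef]
          rw [show C * D / 6 = (C / 12 * s24) ^ 2 by linear_combination (-C / 144) * hs24sq']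
          rw [Real.sqrt_sq (by positivity)]
        calc C / 24 * (a * s24) + C / 24 * (a * s24) = a * (C / 12 * s24) := by ring
          _ = a * μ := by rw [h12]
      linarith [h, e1.symm ▸ h]
  -- pointwise bound for the small coordinates
  have hΦ : ∀ y : ℝ, |H y| ≤ (D + 3 * (a * μ)) * y ^ 2 + μ * |y| ^ 3 := by
    intro y
    rcases eq_or_ne y 0 with rfl | hy
    · simp [hH0]
    · have hy2 : 0 < y ^ 2 := pow_two_pos_of_ne_zero hy
      have hcy : |c| * y ^ 2 ≤ (D + a * μ) * y ^ 2 :=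
        mul_le_mul_of_nonneg_right hc_le hy2.le
      have hq1 : 0 ≤ 2 * D * a ^ 2 := by positivity
      have hq2 : 0 ≤ 2 * D * y ^ 2 := by positivity
      have hq3 : 0 ≤ a * μ * y ^ 2 := by positivity
      have hP : 0 ≤ C / 24 * y ^ 4 := by positivity
      have h1 : |H y - c * y ^ 2| ≤
          min (C / 24 * y ^ 4) (2 * D * a ^ 2 + 2 * D * y ^ 2 + a * μ * y ^ 2) := by
        refine le_min (T2 y) ?_
        have i1 : |H y - c * y ^ 2| ≤ |H y| + |c| * y ^ 2 := by
          calc |H y - c * y ^ 2| ≤ |H y| + |c * y ^ 2| := abs_sub _ _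
            _ = |H y| + |c| * y ^ 2 := by rw [abs_mul, abs_of_pos hy2]
        have i2 : |H y| ≤ D * (a ^ 2 + y ^ 2) := hD_ge' y hy
        nlinarith [mul_nonneg hD0 (sq_nonneg a)]
      have split := min_le_add3 hP hq1 hq2 hq3
      have p1 : min (C / 24 * y ^ 4) (2 * D * a ^ 2) ≤ a * μ * y ^ 2 := by
        refine le_trans (min_le_sqrt_mul hP hq1) ?_
        have e : C / 24 * y ^ 4 * (2 * D * a ^ 2) ≤ C * D / 6 * (a * y ^ 2) ^ 2 := by
          nlinarith [mul_nonneg (mul_nonneg (mul_nonneg hC0 hD0) (sq_nonneg a))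
            (pow_nonneg (sq_nonneg y) 2)]
        calc Real.sqrt (C / 24 * y ^ 4 * (2 * D * a ^ 2)) ≤
            Real.sqrt (C * D / 6 * (a * y ^ 2) ^ 2) := Real.sqrt_le_sqrt e
          _ = μ * (a * y ^ 2) := by
              rw [Real.sqrt_mul (by positivity) _, Real.sqrt_sq (by positivity), hμdef]
          _ = a * μ * y ^ 2 := by ring
      have p2 : min (C / 24 * y ^ 4) (2 * D * y ^ 2) ≤ μ * |y| ^ 3 := by
        refine le_trans (min_le_sqrt_mul hP hq2) ?_
        have habs : (|y| ^ 3) ^ 2 = y ^ 6 := by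
          rw [← abs_pow, sq_abs]
          ring
        have e : C / 24 * y ^ 4 * (2 * D * y ^ 2) ≤ C * D / 6 * (|y| ^ 3) ^ 2 := by
          rw [habs]
          nlinarith [mul_nonneg (mul_nonneg hC0 hD0) (pow_nonneg (sq_nonneg y) 3)]
        calc Real.sqrt (C / 24 * y ^ 4 * (2 * D * y ^ 2)) ≤
            Real.sqrt (C * D / 6 * (|y| ^ 3) ^ 2) := Real.sqrt_le_sqrt e
          _ = μ * |y| ^ 3 := by
              rw [Real.sqrt_mul (by positivity) _, Real.sqrt_sq (by positivity), hμdef]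
      have p3 : min (C / 24 * y ^ 4) (a * μ * y ^ 2) ≤ a * μ * y ^ 2 := min_le_right _ _
      have i4 : |H y| ≤ |c| * y ^ 2 + |H y - c * y ^ 2| := by
        calc |H y| = |c * y ^ 2 + (H y - c * y ^ 2)| := by ring_nf
          _ ≤ |c * y ^ 2| + |H y - c * y ^ 2| := abs_add_le _ _
          _ = |c| * y ^ 2 + |H y - c * y ^ 2| := by rw [abs_mul, abs_of_pos hy2]
      have := h1.trans split
      linarith
  -- now the main estimate
  refine ciSup_le fun η => ?_
  obtain ⟨x, hxne⟩ := η
  dsimp only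
  obtain ⟨i0, hi0⟩ : ∃ i, x i ≠ 0 := by
    by_contra h
    push_neg at h
    exact hxne (funext fun i => h i)
  set ϱ : ℝ := ∑ i, (x i) ^ 2 with hϱdef
  have hti : ∀ i, (0 : ℝ) ≤ (x i) ^ 2 := fun i => sq_nonneg _
  have hirho : ∀ i, (x i) ^ 2 ≤ ϱ := fun i =>
    Finset.single_le_sum (fun i _ => hti i) (Finset.mem_univ i)
  have hϱpos : 0 < ϱ :=
    lt_of_lt_of_le (pow_two_pos_of_ne_zero hi0) (hirho i0)
  have hden : 0 < a ^ 2 + ϱ := add_pos_of_nonneg_of_pos (sq_nonneg a) hϱpos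
  obtain ⟨m, -, hm⟩ := Finset.exists_max_image Finset.univ (fun i => (x i) ^ 2)
    ⟨i0, Finset.mem_univ i0⟩
  have hxm : x m ≠ 0 := by
    intro h0
    have h1 := hm i0 (Finset.mem_univ i0)
    rw [h0] at h1
    nlinarith [pow_two_pos_of_ne_zero hi0]
  set E : Fin N → ℝ := fun j => Real.exp (-Real.pi * (ϱ - (x j) ^ 2)) with hEdef
  have hprod : ∀ j, ∏ i ∈ Finset.univ.erase j, Real.exp (-Real.pi * (x i) ^ 2) = E j := by
    intro j
    rw [← Real.exp_sum, hEdef]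
    congr 1
    rw [← Finset.mul_sum, Finset.sum_erase_eq_sub (Finset.mem_univ j)]
  have hE1 : ∀ j, E j ≤ 1 := by
    intro j
    rw [hEdef]
    apply Real.exp_le_one_iff.mpr
    nlinarith [Real.pi_pos, hirho j]
  have hEpos : ∀ j, 0 < E j := fun j => Real.exp_pos _
  have hEhalf : ∀ j ∈ Finset.univ.erase m, E j ≤ Real.exp (-(Real.pi * ϱ / 2)) := by
    intro j hj
    have hjne : j ≠ m := Finset.ne_of_mem_erase hj
    have pair : (x j) ^ 2 + (x m) ^ 2 ≤ ϱ := by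
      have hsub : ({j, m} : Finset (Fin N)) ⊆ Finset.univ := Finset.subset_univ _
      have := Finset.sum_le_sum_of_subset_of_nonneg hsub (fun i _ _ => hti i)
      rwa [Finset.sum_pair hjne] at this
    have h2t : 2 * (x j) ^ 2 ≤ ϱ := by nlinarith [hm j (Finset.mem_univ j)]
    rw [hEdef]
    apply Real.exp_le_exp.mpr
    nlinarith [Real.pi_pos]
  set A2 : ℝ := ∑ j ∈ Finset.univ.erase m, (x j) ^ 2 * E j with hA2def
  have hA2nonneg : 0 ≤ A2 :=
    Finset.sum_nonneg fun j _ => mul_nonneg (hti j) (hEpos j).le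
  have hsum_erase : ∑ j ∈ Finset.univ.erase m, (x j) ^ 2 ≤ ϱ := by
    have := Finset.sum_le_sum_of_subset_of_nonneg
      (Finset.subset_univ (Finset.univ.erase m)) (fun i _ _ => hti i)
    exact this
  have hA2a : A2 ≤ ϱ := by
    calc A2 ≤ ∑ j ∈ Finset.univ.erase m, (x j) ^ 2 :=
          Finset.sum_le_sum fun j _ => by
            nlinarith [hE1 j, (hEpos j).le, hti j]
      _ ≤ ϱ := hsum_erase
  have hA2b : A2 ≤ ϱ * Real.exp (-(Real.pi * ϱ / 2)) := by
    calc A2 ≤ ∑ j ∈ Finset.univ.erase m, (x j) ^ 2 * Real.exp (-(Real.pi * ϱ / 2)) :=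
          Finset.sum_le_sum fun j hj =>
            mul_le_mul_of_nonneg_left (hEhalf j hj) (hti j)
      _ = (∑ j ∈ Finset.univ.erase m, (x j) ^ 2) * Real.exp (-(Real.pi * ϱ / 2)) := by
          rw [← Finset.sum_mul]
      _ ≤ ϱ * Real.exp (-(Real.pi * ϱ / 2)) :=
          mul_le_mul_of_nonneg_right hsum_erase (Real.exp_pos _).le
  have hsqϱ : Real.sqrt ϱ * Real.sqrt ϱ = ϱ := Real.mul_self_sqrt hϱpos.le
  have hkey1 : Real.sqrt ϱ * Real.exp (-(Real.pi * ϱ / 2)) ≤ 1 := by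
    have h2 : ϱ ≤ Real.exp (Real.pi * ϱ) := by
      have := Real.add_one_le_exp (Real.pi * ϱ)
      nlinarith [Real.pi_gt_three, hϱpos.le]
    have h1 : ϱ * Real.exp (-(Real.pi * ϱ)) ≤ 1 := by
      have h3 : ϱ * Real.exp (-(Real.pi * ϱ)) ≤
          Real.exp (Real.pi * ϱ) * Real.exp (-(Real.pi * ϱ)) :=
        mul_le_mul_of_nonneg_right h2 (Real.exp_pos _).le
      rwa [← Real.exp_add, add_neg_cancel, Real.exp_zero] at h3
    have e2 : Real.exp (-(Real.pi * ϱ / 2)) * Real.exp (-(Real.pi * ϱ / 2)) =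
        Real.exp (-(Real.pi * ϱ)) := by
      rw [← Real.exp_add]
      ring_nf
    nlinarith [Real.sqrt_nonneg ϱ, Real.exp_pos (-(Real.pi * ϱ / 2)), hsqϱ, e2, h1,
      mul_nonneg (Real.sqrt_nonneg ϱ) (Real.exp_pos (-(Real.pi * ϱ / 2))).le]
  have hA2c : A2 ≤ Real.sqrt ϱ := by
    have h5 : Real.sqrt ϱ * (Real.sqrt ϱ * Real.exp (-(Real.pi * ϱ / 2))) =
        ϱ * Real.exp (-(Real.pi * ϱ / 2)) := by rw [← mul_assoc, hsqϱ]
    have h6 := mul_le_mul_of_nonneg_left hkey1 (Real.sqrt_nonneg ϱ)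
    rw [h5, mul_one] at h6
    linarith
  -- the numerator estimate
  have hnum : |∑ j, H (x j) * ∏ i ∈ Finset.univ.erase j, Real.exp (-Real.pi * (x i) ^ 2)| ≤
      (2 * D + 5 / 2 * μ) * (a ^ 2 + ϱ) := by
    have step1 : |∑ j, H (x j) * ∏ i ∈ Finset.univ.erase j, Real.exp (-Real.pi * (x i) ^ 2)| ≤
        ∑ j, |H (x j)| * E j := by
      refine le_trans (Finset.abs_sum_le_sum_abs _ _) ?_
      refine Finset.sum_le_sum fun j _ => ?_
      rw [hprod j, abs_mul, abs_of_pos (hEpos j)]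
    have step2 : ∑ j, |H (x j)| * E j =
        |H (x m)| * E m + ∑ j ∈ Finset.univ.erase m, |H (x j)| * E j :=
      (Finset.add_sum_erase _ _ (Finset.mem_univ m)).symm
    have hm1 : |H (x m)| * E m ≤ D * (a ^ 2 + ϱ) := by
      have i1 : |H (x m)| ≤ D * (a ^ 2 + (x m) ^ 2) := hD_ge' _ hxm
      have i2 : |H (x m)| * E m ≤ |H (x m)| := by
        nlinarith [hE1 m, (hEpos m).le, abs_nonneg (H (x m))]
      have i3 : D * (a ^ 2 + (x m) ^ 2) ≤ D * (a ^ 2 + ϱ) := by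
        nlinarith [hirho m, hD0]
      linarith
    have hsum' : ∑ j ∈ Finset.univ.erase m, |H (x j)| * E j ≤
        (D + 3 * (a * μ)) * A2 + μ * Real.sqrt ϱ * A2 := by
      have hterm : ∀ j ∈ Finset.univ.erase m, |H (x j)| * E j ≤
          (D + 3 * (a * μ)) * ((x j) ^ 2 * E j) +
            μ * Real.sqrt ϱ * ((x j) ^ 2 * E j) := by
        intro j _
        have h1 := hΦ (x j)
        have habsx : |x j| ≤ Real.sqrt ϱ := by
          rw [← Real.sqrt_sq_eq_abs]
          exact Real.sqrt_le_sqrt (hirho j)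
        have h2 : |x j| ^ 3 ≤ Real.sqrt ϱ * (x j) ^ 2 := by
          calc |x j| ^ 3 = |x j| * |x j| ^ 2 := by ring
            _ = |x j| * (x j) ^ 2 := by rw [sq_abs]
            _ ≤ Real.sqrt ϱ * (x j) ^ 2 :=
                mul_le_mul_of_nonneg_right habsx (hti j)
        have h3 : |H (x j)| ≤ (D + 3 * (a * μ)) * (x j) ^ 2 +
            μ * (Real.sqrt ϱ * (x j) ^ 2) := by
          have h4 := mul_le_mul_of_nonneg_left h2 hμ0
          linarith
        calc |H (x j)| * E j ≤
            ((D + 3 * (a * μ)) * (x j) ^ 2 + μ * (Real.sqrt ϱ * (x j) ^ 2)) * E j :=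
              mul_le_mul_of_nonneg_right h3 (hEpos j).le
          _ = (D + 3 * (a * μ)) * ((x j) ^ 2 * E j) +
              μ * Real.sqrt ϱ * ((x j) ^ 2 * E j) := by ring
      calc ∑ j ∈ Finset.univ.erase m, |H (x j)| * E j ≤
          ∑ j ∈ Finset.univ.erase m, ((D + 3 * (a * μ)) * ((x j) ^ 2 * E j) +
            μ * Real.sqrt ϱ * ((x j) ^ 2 * E j)) := Finset.sum_le_sum hterm
        _ = (D + 3 * (a * μ)) * A2 + μ * Real.sqrt ϱ * A2 := by
            rw [Finset.sum_add_distrib, ← Finset.mul_sum, ← Finset.mul_sum, hA2def]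
    -- combine
    have k2 : D * A2 ≤ D * ϱ := mul_le_mul_of_nonneg_left hA2a hD0
    have k3 : a * A2 ≤ (a ^ 2 + ϱ) / 2 := by
      have h7 : a * A2 ≤ a * Real.sqrt ϱ := mul_le_mul_of_nonneg_left hA2c ha
      nlinarith [sq_nonneg (a - Real.sqrt ϱ), hsqϱ]
    have k4 : Real.sqrt ϱ * A2 ≤ ϱ := by
      have h8 : Real.sqrt ϱ * A2 ≤ Real.sqrt ϱ * Real.sqrt ϱ :=
        mul_le_mul_of_nonneg_left hA2c (Real.sqrt_nonneg _)
      linarith [hsqϱ ▸ h8]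
    have k5 : 0 ≤ D * a ^ 2 := mul_nonneg hD0 (sq_nonneg a)
    have k6 : 0 ≤ μ * a ^ 2 := mul_nonneg hμ0 (sq_nonneg a)
    have k3' : 3 * μ * (a * A2) ≤ 3 * μ * ((a ^ 2 + ϱ) / 2) :=
      mul_le_mul_of_nonneg_left k3 (by positivity)
    have k4' : μ * (Real.sqrt ϱ * A2) ≤ μ * ϱ := mul_le_mul_of_nonneg_left k4 hμ0
    calc |∑ j, H (x j) * ∏ i ∈ Finset.univ.erase j, Real.exp (-Real.pi * (x i) ^ 2)| ≤
        ∑ j, |H (x j)| * E j := step1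
      _ = |H (x m)| * E m + ∑ j ∈ Finset.univ.erase m, |H (x j)| * E j := step2
      _ ≤ D * (a ^ 2 + ϱ) + ((D + 3 * (a * μ)) * A2 + μ * Real.sqrt ϱ * A2) := by
          linarith [hm1, hsum']
      _ ≤ (2 * D + 5 / 2 * μ) * (a ^ 2 + ϱ) := by nlinarith [k2, k3', k4', k5, k6]
  -- final numeric comparison
  have hfin : 2 * D + 5 / 2 * μ ≤ Real.sqrt ((8 * C + D) * D) := by
    apply Real.le_sqrt_of_sq_le
    have h3 : D ^ 2 ≤ 3 * μ ^ 2 := by nlinarith [hμsq, hDC, hD0]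
    nlinarith [h3, sq_nonneg (D - 2 * μ), hμsq, hμ0, hD0]
  rw [div_le_iff₀ hden]
  calc |∑ j, H (x j) * ∏ i ∈ Finset.univ.erase j, Real.exp (-Real.pi * (x i) ^ 2)| ≤
      (2 * D + 5 / 2 * μ) * (a ^ 2 + ϱ) := hnum
    _ ≤ Real.sqrt ((8 * C + D) * D) * (a ^ 2 + ϱ) :=
        mul_le_mul_of_nonneg_right hfin hden.le
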